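/- Let k : ℕ → ℕ be a strictly increasing sequence (k_n is the episode of the n-th visit) and let d : ℕ → ℕ be a delay sequence with d_i ≤ d_max for all i. For n ≥ 1 define e_n = min { j ∈ [1, n-1] : d_j + k_j > k_n - 1 } if this set is nonempty, and e_n = n otherwise. Then for every n ≥ 1, n - e_n ≤ d_max. -/
import Mathlib


open Finset

theorem earliest_unreceived_gap_le_dmax
    (k d : ℕ → ℕ) (hk : StrictMono k)
    (dmax : ℕ) (hd : ∀ i, d i ≤ dmax)
    (e : ℕ → ℕ)
    (he : ∀ n, e n = sInf ({j | 1 ≤ j ∧ j ≤ n - 1 ∧ k n - 1 < d j + k j} ∪ {n})) :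
    ∀ n, 1 ≤ n → n - e n ≤ dmax := by
  intro n hn
  have hmem : e n ∈ ({j | 1 ≤ j ∧ j ≤ n - 1 ∧ k n - 1 < d j + k j} ∪ {n} : Set ℕ) := by
    rw [he n]
    apply Nat.sInf_mem
    exact ⟨n, Or.inr rfl⟩
  rcases hmem with ⟨h1, h2, h3⟩ | h
  · -- e n ∈ S
    set j := e n with hj
    have hjn : j < n := lt_of_le_of_lt h2 (Nat.sub_lt hn one_pos)
    -- k j + (n - j) ≤ k n
    have hadd : ∀ m, k j + m ≤ k (j + m) := by
      intro m
      induction m with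
      | zero => simp
      | succ m ih =>
        have := hk (Nat.lt_succ_self (j + m))
        have heq : k (j + (m + 1)) = k ((j + m).succ) := rfl
        rw [heq]
        omega
    have hkk : k j + (n - j) ≤ k n := by
      have := hadd (n - j)
      rwa [Nat.add_sub_cancel' hjn.le] at this
    have hdj := hd j
    omega
  · simp only [Set.mem_singleton_iff] at h
    omega
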